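/- Let α > 0, λ ∈ (0,1], v_g ≥ 0 and v_b = ((1−λ)/λ)·v_g. Then the consumer welfare from v_g good views and v_b bad views marked with a certificate of quality λ, when the reading-cost distribution is A(q) = q^α, equals v_g·λ^α/(α+1); explicitly, v_g·∫₀^λ (1−q)·α·q^{α−1} dq − v_b·∫₀^λ q·α·q^{α−1} dq = v_g·λ^α/(α+1). In particular, consumer welfare is proportional to the engagement A(λ)·v_g = λ^α·v_g. -/

import Mathlib

open Set

lemma aux_rpow_integrable (r a b : ℝ) (hr : -1 < r) :
    IntervalIntegrable (fun q : ℝ => q ^ r) MeasureTheory.volume a b :=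
  intervalIntegral.intervalIntegrable_rpow' hr

lemma aux_int (α l : ℝ) (hα : 0 < α) (hl0 : 0 < l) :
    (∫ q in (0:ℝ)..l, q * (α * q ^ (α - 1))) = α * l ^ (α + 1) / (α + 1) := by
  have hcongr : ∀ q ∈ Set.uIcc (0:ℝ) l, q * (α * q ^ (α - 1)) = α * q ^ α := by
    intro q hq
    rw [Set.uIcc_of_le hl0.le] at hq
    rcases eq_or_lt_of_le hq.1 with h | h
    · simp [← h, Real.zero_rpow (ne_of_gt hα)]
    · have hq0 : q ≠ 0 := ne_of_gt h
      rw [show α = (α - 1) + 1 by ring, Real.rpow_add_one hq0]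
      ring
  rw [intervalIntegral.integral_congr hcongr,
    intervalIntegral.integral_const_mul, integral_rpow (Or.inl (by linarith))]
  rw [Real.zero_rpow (by positivity)]
  ring

lemma aux_int2 (α l : ℝ) (hα : 0 < α) (hl0 : 0 < l) :
    (∫ q in (0:ℝ)..l, α * q ^ (α - 1)) = l ^ α := by
  rw [intervalIntegral.integral_const_mul, integral_rpow (Or.inl (by linarith))]
  rw [show α - 1 + 1 = α by ring, Real.zero_rpow (ne_of_gt hα)]
  field_simp
  rw [sub_zero]

lemma aux_split (α l : ℝ) (hα : 0 < α) (hl0 : 0 < l) :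
    (∫ q in (0:ℝ)..l, (1 - q) * (α * q ^ (α - 1)))
      = (∫ q in (0:ℝ)..l, α * q ^ (α - 1)) - ∫ q in (0:ℝ)..l, q * (α * q ^ (α - 1)) := by
  have hcongr : ∀ q ∈ Set.uIcc (0:ℝ) l,
      (1 - q) * (α * q ^ (α - 1)) = α * q ^ (α - 1) - α * q ^ α := by
    intro q hq
    rw [Set.uIcc_of_le hl0.le] at hq
    rcases eq_or_lt_of_le hq.1 with h | h
    · simp [← h, Real.zero_rpow (ne_of_gt hα)]
    · have hq0 : q ≠ 0 := ne_of_gt h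
      rw [show α = (α - 1) + 1 by ring, Real.rpow_add_one hq0]
      ring
  have hcongr2 : ∀ q ∈ Set.uIcc (0:ℝ) l, q * (α * q ^ (α - 1)) = α * q ^ α := by
    intro q hq
    rw [Set.uIcc_of_le hl0.le] at hq
    rcases eq_or_lt_of_le hq.1 with h | h
    · simp [← h, Real.zero_rpow (ne_of_gt hα)]
    · have hq0 : q ≠ 0 := ne_of_gt h
      rw [show α = (α - 1) + 1 by ring, Real.rpow_add_one hq0]
      ring
  rw [intervalIntegral.integral_congr hcongr, intervalIntegral.integral_congr hcongr2,
    intervalIntegral.integral_sub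
      ((aux_rpow_integrable (α - 1) 0 l (by linarith)).const_mul α)
      ((aux_rpow_integrable α 0 l (by linarith)).const_mul α)]

/-- with reading-cost distribution `A(q) = q^α` (density `α·q^{α−1}`),
the consumer welfare from `v_g` good views and `v_b = ((1−λ)/λ)·v_g` bad views under a
certificate of quality `λ` equals `v_g·λ^α/(α+1)`, i.e. it is proportional to the
engagement `A(λ)·v_g = λ^α·v_g`. -/
theorem stmt15
    (α l vg : ℝ) (hα : 0 < α) (hl : l ∈ Ioc (0:ℝ) 1) (hvg : 0 ≤ vg) :
    vg * (∫ q in (0:ℝ)..l, (1 - q) * (α * q ^ (α - 1))) -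
        ((1 - l) / l * vg) * (∫ q in (0:ℝ)..l, q * (α * q ^ (α - 1))) =
      vg * l ^ α / (α + 1) := by
  obtain ⟨hl0, hl1⟩ := hl
  rw [aux_split α l hα hl0, aux_int α l hα hl0, aux_int2 α l hα hl0]
  have hlpow : l ^ (α + 1) = l ^ α * l := Real.rpow_add_one (ne_of_gt hl0) α
  rw [hlpow]
  have hα1 : α + 1 ≠ 0 := by linarith
  field_simp
  ring
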